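/- Let X ⊆ ℝ^d be a product of open intervals, let 𝒬 be an admissible covering of X, let T be a measurable kernel on (0,∞) × X × X satisfying (A₀′) and (A₁′), and let {ψ_Q}_{Q∈𝒬} be a partition of unity subordinate to 𝒬, i.e. each ψ_Q ∈ C¹(X) with 0 ≤ ψ_Q ≤ χ_{Q^*}, ‖∇ψ_Q‖_∞ ≤ C₃ d_Q⁻¹, and Σ_{Q∈𝒬} ψ_Q = 1 on X. Then there is a constant C such that sup_{y∈X} Σ_{Q∈𝒬} ∫_{Q^{**}} sup_{0<t≤d_Q²} T_t(x,y) |ψ_Q(x) − ψ_Q(y)| dx ≤ C. -/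

import Mathlib

open MeasureTheory Set Metric Filter
open scoped ENNReal NNReal

noncomputable section

/-- `ℝ^d` with the Euclidean structure and the Lebesgue measure. -/
abbrev Rd (d : ℕ) := EuclideanSpace ℝ (Fin d)

/-- The cuboid `Q(z, r₁, …, r_d)`, always taken as a subset of `X`. -/
def cuboid {d : ℕ} (X : Set (Rd d)) (z : Rd d) (r : Fin d → ℝ) : Set (Rd d) :=
  {x ∈ X | ∀ i, |x i - z i| ≤ r i}

/-- The `k`-fold enlargement `Q^{*⋯*}` of the cuboid, with enlargement parameter `κ`
(`k = 1` is `Q^*`, `k = 2` is `Q^{**}`, `k = 3` is `Q^{***}`). -/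
def cuboidSt {d : ℕ} (X : Set (Rd d)) (z : Rd d) (r : Fin d → ℝ) (κ : ℝ) (k : ℕ) :
    Set (Rd d) :=
  cuboid X z fun i => κ ^ k * r i

/-- The classical heat kernel `H_t(x,y) = (4πt)^{-d/2} exp(-|x-y|²/(4t))` on `ℝ^d`. -/
def heatK (d : ℕ) (t : ℝ) (x y : Rd d) : ℝ :=
  (4 * Real.pi * t) ^ (-(d : ℝ) / 2) * Real.exp (-dist x y ^ 2 / (4 * t))

/-- An admissible covering of `X ⊆ ℝ^d` by (countably many) cuboids, with enlargement
parameter `κ`: the cuboids cover `X`, pairwise intersect in measure zero, are "almost cubes"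
(constant `C₁`), neighbours have comparable diameters (constant `C₂`), the triple enlargements
have bounded overlap (constant `C₃`), and triple enlargements intersect iff the cuboids do. -/
structure AdmissibleCovering (d : ℕ) (X : Set (Rd d)) (κ : ℝ) (ι : Type) where
  z : ι → Rd d
  r : ι → Fin d → ℝ
  r_pos : ∀ n i, 0 < r n i
  covers : X ⊆ ⋃ n, cuboid X (z n) (r n)
  ae_disjoint : ∀ m n, m ≠ n →
    volume (cuboid X (z m) (r m) ∩ cuboid X (z n) (r n)) = 0
  C₁ : ℝ
  C₁_pos : 0 < C₁
  ratio : ∀ n i j, r n i ≤ C₁ * r n j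
  C₂ : ℝ
  C₂_pos : 0 < C₂
  comparable : ∀ m n, (cuboid X (z m) (r m) ∩ cuboid X (z n) (r n)).Nonempty →
    diam (cuboid X (z n) (r n)) ≤ C₂ * diam (cuboid X (z m) (r m))
  C₃ : ℝ≥0∞
  C₃_lt_top : C₃ < ⊤
  finite_overlap : ∀ x : Rd d,
    (∑' n, (cuboidSt X (z n) (r n) κ 3).indicator (fun _ => (1 : ℝ≥0∞)) x) ≤ C₃
  neighbors : ∀ m n,
    ((cuboidSt X (z m) (r m) κ 3) ∩ (cuboidSt X (z n) (r n) κ 3)).Nonempty ↔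
      ((cuboid X (z m) (r m)) ∩ (cuboid X (z n) (r n))).Nonempty

/-- `cov.Q n k` is the `k`-fold enlargement of the `n`-th cuboid of the covering
(`k = 0` gives the cuboid `Q` itself). -/
def AdmissibleCovering.Q {d : ℕ} {X : Set (Rd d)} {κ : ℝ} {ι : Type}
    (cov : AdmissibleCovering d X κ ι) (n : ι) (k : ℕ) : Set (Rd d) :=
  cuboidSt X (cov.z n) (cov.r n) κ k

/-- A `𝒬`-atom: either a classical atom supported in a cube `K ⊆ Q^*` for some `Q ∈ 𝒬`,
or the normalised indicator `|Q|⁻¹ χ_Q` of some `Q ∈ 𝒬`. -/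
def IsQAtom {d : ℕ} {X : Set (Rd d)} {κ : ℝ} {ι : Type}
    (cov : AdmissibleCovering d X κ ι) (a : Rd d → ℂ) : Prop :=
  (∃ (n : ι) (w : Rd d) (ρ : ℝ), 0 < ρ ∧
      cuboid X w (fun _ => ρ) ⊆ cov.Q n 1 ∧
      (∀ x ∉ cuboid X w fun _ => ρ, a x = 0) ∧
      (∀ x, ‖a x‖ ≤ ((volume (cuboid X w fun _ => ρ)).toReal)⁻¹) ∧
      (∫ x, a x) = 0) ∨
  (∃ n : ι, a = (cov.Q n 0).indicator fun _ => (((volume (cov.Q n 0)).toReal)⁻¹ : ℂ))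

section AuxStmt3

lemma nontrivial_Rd {d : ℕ} (hd : 0 < d) : Nontrivial (Rd d) := by
  refine ⟨⟨EuclideanSpace.single ⟨0, hd⟩ (1 : ℝ), 0, fun h => ?_⟩⟩
  have h0 := congrArg (fun v : Rd d => v ⟨0, hd⟩) h
  simp [EuclideanSpace.single_apply] at h0

lemma volume_ball_Rd {d : ℕ} (hd : 0 < d) (y : Rd d) {ρ : ℝ} (hρ : 0 ≤ ρ) :
    volume (ball y ρ) = ENNReal.ofReal (ρ ^ d) * volume (ball (0 : Rd d) 1) := by
  haveI := nontrivial_Rd hd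
  have := MeasureTheory.Measure.addHaar_ball (volume : Measure (Rd d)) y hρ
  rwa [finrank_euclideanSpace_fin] at this

lemma annulus_est {d : ℕ} (hd : 0 < d) (y : Rd d) {ρ σ c : ℝ} (hρ : 0 ≤ ρ)
    (f : Rd d → ℝ≥0∞)
    (hbound : ∀ x ∈ ball y ρ \ ball y σ, f x ≤ ENNReal.ofReal c) :
    ∫⁻ x in ball y ρ \ ball y σ, f x ≤
      ENNReal.ofReal c * (ENNReal.ofReal (ρ ^ d) * volume (ball (0 : Rd d) 1)) := by
  calc ∫⁻ x in ball y ρ \ ball y σ, f x ≤ ∫⁻ _ in ball y ρ \ ball y σ, ENNReal.ofReal c :=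
        setLIntegral_mono' (measurableSet_ball.diff measurableSet_ball) hbound
    _ = ENNReal.ofReal c * volume (ball y ρ \ ball y σ) := setLIntegral_const _ _
    _ ≤ _ := by
        refine mul_le_mul_right ?_ _
        exact (measure_mono diff_subset).trans (volume_ball_Rd hd y hρ).le

lemma subset_annuli_ball {d : ℕ} {y : Rd d} {R : ℝ} (hR : 0 < R) :
    ball y R ⊆ {y} ∪ ⋃ k : ℕ, (ball y (R * 2⁻¹ ^ k) \ ball y (R * 2⁻¹ ^ (k + 1))) := by
  intro x hx
  rcases eq_or_ne x y with rfl | hxy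
  · exact Or.inl rfl
  right
  have hr : 0 < dist x y := dist_pos.2 hxy
  have hex : ∃ k : ℕ, R * 2⁻¹ ^ k ≤ dist x y := by
    obtain ⟨k, hk⟩ := exists_pow_lt_of_lt_one (div_pos hr hR) (by norm_num : (2⁻¹ : ℝ) < 1)
    refine ⟨k, ?_⟩
    rw [← le_div_iff₀' hR]
    exact hk.le
  classical
  set k₀ := Nat.find hex with hk₀
  have hk₀spec : R * 2⁻¹ ^ k₀ ≤ dist x y := Nat.find_spec hex
  have hk₀pos : 0 < k₀ := by
    rcases Nat.eq_zero_or_pos k₀ with h | h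
    · exfalso
      rw [h] at hk₀spec
      simp only [pow_zero, mul_one] at hk₀spec
      have hxball : dist x y < R := mem_ball.1 hx
      linarith
    · exact h
  refine mem_iUnion.2 ⟨k₀ - 1, ?_, ?_⟩
  · have hmin : ¬ (R * 2⁻¹ ^ (k₀ - 1) ≤ dist x y) := Nat.find_min hex (Nat.sub_lt hk₀pos one_pos)
    exact mem_ball.2 (by push_neg at hmin; simpa [dist_comm] using hmin)
  · intro hmem
    have hlt : dist x y < R * 2⁻¹ ^ (k₀ - 1 + 1) := mem_ball.1 hmem
    rw [Nat.sub_add_cancel hk₀pos] at hlt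
    linarith

lemma subset_annuli_compl {d : ℕ} {y : Rd d} {R : ℝ} (hR : 0 < R) :
    (ball y R)ᶜ ⊆ ⋃ k : ℕ, (ball y (R * 2 ^ (k + 1)) \ ball y (R * 2 ^ k)) := by
  intro x hx
  have hdist : R ≤ dist x y := (not_lt).1 (fun h => hx (mem_ball.2 h))
  have hex : ∃ k : ℕ, dist x y < R * 2 ^ (k + 1) := by
    obtain ⟨k, hk⟩ := pow_unbounded_of_one_lt (dist x y / R) (one_lt_two (α := ℝ))
    refine ⟨k, ?_⟩
    have h1 : dist x y / R < 2 ^ (k + 1) :=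
      hk.trans_le (pow_le_pow_right₀ (by norm_num) (Nat.le_succ k))
    calc dist x y = (dist x y / R) * R := by field_simp
      _ < 2 ^ (k + 1) * R := mul_lt_mul_of_pos_right h1 hR
      _ = R * 2 ^ (k + 1) := by ring
  classical
  set k₀ := Nat.find hex with hk₀
  refine mem_iUnion.2 ⟨k₀, mem_ball.2 (Nat.find_spec hex), fun hmem => ?_⟩
  have hlt : dist x y < R * 2 ^ k₀ := mem_ball.1 hmem
  rcases Nat.eq_zero_or_pos k₀ with h | h
  · rw [h] at hlt; simp only [pow_zero, mul_one] at hlt; linarith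
  · have hmin : ¬ (dist x y < R * 2 ^ (k₀ - 1 + 1)) := Nat.find_min hex (Nat.sub_lt h one_pos)
    rw [Nat.sub_add_cancel h] at hmin
    exact hmin hlt

/-- Radial integral bound near the singularity:
`∫_{B(y,R)} |x-y|^{1-d} dx ≲ R`. -/
lemma lintegral_ball_rpow_le {d : ℕ} (hd : 0 < d) (y : Rd d) {R : ℝ} (hR : 0 < R) :
    ∫⁻ x in ball y R, ENNReal.ofReal (dist x y ^ ((1 : ℝ) - d)) ≤
      ENNReal.ofReal (2 ^ d * R) * volume (ball (0 : Rd d) 1) *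
        (1 - ENNReal.ofReal 2⁻¹)⁻¹ := by
  haveI := nontrivial_Rd hd
  set V := volume (ball (0 : Rd d) 1) with hV
  set f : Rd d → ℝ≥0∞ := fun x => ENNReal.ofReal (dist x y ^ ((1 : ℝ) - d)) with hf
  have step1 : ∫⁻ x in ball y R, f x ≤
      ∑' k : ℕ, ∫⁻ x in ball y (R * 2⁻¹ ^ k) \ ball y (R * 2⁻¹ ^ (k + 1)), f x := by
    have hsing : ∫⁻ x in ({y} : Set (Rd d)), f x = 0 := by
      rw [Measure.restrict_eq_zero.2 (measure_singleton y)]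
      exact lintegral_zero_measure f
    calc ∫⁻ x in ball y R, f x
        ≤ ∫⁻ x in ({y} ∪ ⋃ k : ℕ, (ball y (R * 2⁻¹ ^ k) \ ball y (R * 2⁻¹ ^ (k + 1)))), f x :=
          lintegral_mono' (Measure.restrict_mono (subset_annuli_ball hR) le_rfl) le_rfl
      _ ≤ (∫⁻ x in ({y} : Set (Rd d)), f x) +
            ∫⁻ x in (⋃ k : ℕ, (ball y (R * 2⁻¹ ^ k) \ ball y (R * 2⁻¹ ^ (k + 1)))), f x :=
          le_trans (lintegral_mono' (Measure.restrict_union_le _ _) le_rfl)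
            (le_of_eq (lintegral_add_measure _ _ _))
      _ = ∫⁻ x in (⋃ k : ℕ, (ball y (R * 2⁻¹ ^ k) \ ball y (R * 2⁻¹ ^ (k + 1)))), f x := by
          rw [hsing, zero_add]
      _ ≤ _ := lintegral_iUnion_le _ _
  have step2 : ∀ k : ℕ,
      ∫⁻ x in ball y (R * 2⁻¹ ^ k) \ ball y (R * 2⁻¹ ^ (k + 1)), f x ≤
        ENNReal.ofReal (2 ^ d * R) * V * ENNReal.ofReal 2⁻¹ ^ (k + 1) := by
    intro k
    have hs : (0 : ℝ) < R * 2⁻¹ ^ (k + 1) := by positivity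
    have hbig : (0 : ℝ) ≤ R * 2⁻¹ ^ k := by positivity
    have hexp : (1 : ℝ) - d ≤ 0 := by
      have h1 : (1 : ℝ) ≤ d := by exact_mod_cast hd
      linarith
    have hb : ∀ x ∈ ball y (R * 2⁻¹ ^ k) \ ball y (R * 2⁻¹ ^ (k + 1)),
        f x ≤ ENNReal.ofReal ((R * 2⁻¹ ^ (k + 1)) ^ ((1 : ℝ) - d)) := by
      intro x hx
      apply ENNReal.ofReal_le_ofReal
      have hdist : R * 2⁻¹ ^ (k + 1) ≤ dist x y := by
        have h2 := hx.2
        rw [mem_ball] at h2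
        push_neg at h2
        simpa [dist_comm] using h2
      exact Real.rpow_le_rpow_of_nonpos hs hdist hexp
    have key : (R * 2⁻¹ ^ (k + 1)) ^ ((1 : ℝ) - d) * (R * 2⁻¹ ^ k) ^ d
        = 2 ^ d * R * 2⁻¹ ^ (k + 1) := by
      have h2 : (R * 2⁻¹ ^ k) = 2 * (R * 2⁻¹ ^ (k + 1)) := by ring
      set s : ℝ := R * 2⁻¹ ^ (k + 1) with hsdef
      rw [h2, mul_pow, ← Real.rpow_natCast s d, mul_comm ((2:ℝ) ^ d) _, ← mul_assoc,
        ← Real.rpow_add hs]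
      have h3 : (1 : ℝ) - d + d = 1 := by ring
      rw [h3, Real.rpow_one]
      ring
    calc ∫⁻ x in ball y (R * 2⁻¹ ^ k) \ ball y (R * 2⁻¹ ^ (k + 1)), f x
        ≤ ENNReal.ofReal ((R * 2⁻¹ ^ (k + 1)) ^ ((1 : ℝ) - d)) *
            (ENNReal.ofReal ((R * 2⁻¹ ^ k) ^ d) * V) := annulus_est hd y hbig f hb
      _ = ENNReal.ofReal ((R * 2⁻¹ ^ (k + 1)) ^ ((1 : ℝ) - d) * (R * 2⁻¹ ^ k) ^ d) * V := by
          rw [← mul_assoc, ← ENNReal.ofReal_mul (Real.rpow_nonneg hs.le _)]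
      _ = ENNReal.ofReal (2 ^ d * R * 2⁻¹ ^ (k + 1)) * V := by rw [key]
      _ = ENNReal.ofReal (2 ^ d * R) * V * ENNReal.ofReal 2⁻¹ ^ (k + 1) := by
          rw [ENNReal.ofReal_mul (by positivity), ENNReal.ofReal_pow (by norm_num : (0:ℝ) ≤ 2⁻¹)]
          ring
  calc ∫⁻ x in ball y R, f x ≤ _ := step1
    _ ≤ ∑' k : ℕ, ENNReal.ofReal (2 ^ d * R) * V * ENNReal.ofReal 2⁻¹ ^ (k + 1) :=
        ENNReal.tsum_le_tsum step2
    _ = ENNReal.ofReal (2 ^ d * R) * V * ∑' k : ℕ, ENNReal.ofReal 2⁻¹ ^ (k + 1) :=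
        ENNReal.tsum_mul_left
    _ ≤ ENNReal.ofReal (2 ^ d * R) * V * (1 - ENNReal.ofReal 2⁻¹)⁻¹ := by
        refine mul_le_mul_right ?_ _
        rw [ENNReal.tsum_geometric_add_one]
        calc ENNReal.ofReal 2⁻¹ * (1 - ENNReal.ofReal 2⁻¹)⁻¹
            ≤ 1 * (1 - ENNReal.ofReal 2⁻¹)⁻¹ :=
              mul_le_mul_left (ENNReal.ofReal_le_one.2 (by norm_num)) _
          _ = _ := one_mul _

/-- Radial integral bound away from the singularity:
`∫_{B(y,R)ᶜ} |x-y|^{-d-2ν} dx ≲ R^{-2ν}`. -/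
lemma lintegral_compl_ball_rpow_le {d : ℕ} (hd : 0 < d) (y : Rd d) {R ν : ℝ}
    (hR : 0 < R) (hν : 0 < ν) :
    ∫⁻ x in (ball y R)ᶜ, ENNReal.ofReal (dist x y ^ (-(d : ℝ) - 2 * ν)) ≤
      ENNReal.ofReal (2 ^ d * R ^ (-(2 * ν))) * volume (ball (0 : Rd d) 1) *
        (1 - ENNReal.ofReal ((2 : ℝ) ^ (-(2 * ν))))⁻¹ := by
  haveI := nontrivial_Rd hd
  set V := volume (ball (0 : Rd d) 1) with hV
  set q : ℝ≥0∞ := ENNReal.ofReal ((2 : ℝ) ^ (-(2 * ν))) with hq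
  set f : Rd d → ℝ≥0∞ := fun x => ENNReal.ofReal (dist x y ^ (-(d : ℝ) - 2 * ν)) with hf
  have step1 : ∫⁻ x in (ball y R)ᶜ, f x ≤
      ∑' k : ℕ, ∫⁻ x in ball y (R * 2 ^ (k + 1)) \ ball y (R * 2 ^ k), f x :=
    le_trans (lintegral_mono' (Measure.restrict_mono (subset_annuli_compl hR) le_rfl) le_rfl)
      (lintegral_iUnion_le _ _)
  have step2 : ∀ k : ℕ,
      ∫⁻ x in ball y (R * 2 ^ (k + 1)) \ ball y (R * 2 ^ k), f x ≤
        ENNReal.ofReal (2 ^ d * R ^ (-(2 * ν))) * V * q ^ k := by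
    intro k
    have hs : (0 : ℝ) < R * 2 ^ k := by positivity
    have hbig : (0 : ℝ) ≤ R * 2 ^ (k + 1) := by positivity
    have hexp : -(d : ℝ) - 2 * ν ≤ 0 := by
      have h1 : (0 : ℝ) ≤ d := Nat.cast_nonneg d
      linarith
    have hb : ∀ x ∈ ball y (R * 2 ^ (k + 1)) \ ball y (R * 2 ^ k),
        f x ≤ ENNReal.ofReal ((R * 2 ^ k) ^ (-(d : ℝ) - 2 * ν)) := by
      intro x hx
      apply ENNReal.ofReal_le_ofReal
      have hdist : R * 2 ^ k ≤ dist x y := by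
        have h2 := hx.2
        rw [mem_ball] at h2
        push_neg at h2
        simpa [dist_comm] using h2
      exact Real.rpow_le_rpow_of_nonpos hs hdist hexp
    have key : (R * 2 ^ k) ^ (-(d : ℝ) - 2 * ν) * (R * 2 ^ (k + 1)) ^ d
        = 2 ^ d * R ^ (-(2 * ν)) * ((2 : ℝ) ^ (-(2 * ν))) ^ k := by
      have h2 : (R * 2 ^ (k + 1)) = 2 * (R * 2 ^ k) := by ring
      set s : ℝ := R * 2 ^ k with hsdef
      rw [h2, mul_pow, ← Real.rpow_natCast s d, mul_comm ((2:ℝ) ^ d) _, ← mul_assoc,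
        ← Real.rpow_add hs]
      have h3 : -(d : ℝ) - 2 * ν + d = -(2 * ν) := by ring
      rw [h3]
      have h4 : s ^ (-(2 * ν)) = R ^ (-(2 * ν)) * ((2 : ℝ) ^ (-(2 * ν))) ^ k := by
        rw [hsdef, Real.mul_rpow hR.le (by positivity)]
        congr 1
        rw [← Real.rpow_natCast (2 : ℝ) k, ← Real.rpow_mul (by norm_num : (0:ℝ) ≤ 2),
          mul_comm, Real.rpow_mul (by norm_num : (0:ℝ) ≤ 2), Real.rpow_natCast]
      rw [h4]
      ring
    calc ∫⁻ x in ball y (R * 2 ^ (k + 1)) \ ball y (R * 2 ^ k), f x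
        ≤ ENNReal.ofReal ((R * 2 ^ k) ^ (-(d : ℝ) - 2 * ν)) *
            (ENNReal.ofReal ((R * 2 ^ (k + 1)) ^ d) * V) := annulus_est hd y hbig f hb
      _ = ENNReal.ofReal ((R * 2 ^ k) ^ (-(d : ℝ) - 2 * ν) * (R * 2 ^ (k + 1)) ^ d) * V := by
          rw [← mul_assoc, ← ENNReal.ofReal_mul (Real.rpow_nonneg hs.le _)]
      _ = ENNReal.ofReal (2 ^ d * R ^ (-(2 * ν)) * ((2 : ℝ) ^ (-(2 * ν))) ^ k) * V := by
          rw [key]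
      _ = ENNReal.ofReal (2 ^ d * R ^ (-(2 * ν))) * V * q ^ k := by
          rw [ENNReal.ofReal_mul (by positivity),
            ENNReal.ofReal_pow (by positivity : (0:ℝ) ≤ (2:ℝ) ^ (-(2 * ν)))]
          ring
  calc ∫⁻ x in (ball y R)ᶜ, f x ≤ _ := step1
    _ ≤ ∑' k : ℕ, ENNReal.ofReal (2 ^ d * R ^ (-(2 * ν))) * V * q ^ k :=
        ENNReal.tsum_le_tsum step2
    _ = ENNReal.ofReal (2 ^ d * R ^ (-(2 * ν))) * V * ∑' k : ℕ, q ^ k :=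
        ENNReal.tsum_mul_left
    _ = _ := by rw [ENNReal.tsum_geometric]


lemma tsum_lintegral_le' {α : Type*} [MeasurableSpace α] (μ : MeasureTheory.Measure α) {ι' : Type*}
    (f : ι' → α → ℝ≥0∞) : ∑' n, ∫⁻ x, f n x ∂μ ≤ ∫⁻ x, ∑' n, f n x ∂μ := by
  rw [ENNReal.tsum_eq_iSup_sum]
  refine iSup_le fun s => ?_
  have h1 : ∑ n ∈ s, ∫⁻ x, f n x ∂μ ≤ ∫⁻ x, ∑ n ∈ s, f n x ∂μ := by
    classical
    induction s using Finset.induction_on with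
    | empty => simp
    | insert a s ha ih =>
        rw [Finset.sum_insert ha]
        simp_rw [Finset.sum_insert ha]
        exact le_trans (add_le_add_right ih _) (MeasureTheory.le_lintegral_add _ _)
  exact h1.trans (lintegral_mono fun x => ENNReal.sum_le_tsum s)

end AuxStmt3

set_option maxHeartbeats 1000000 in
/-- If `X ⊆ ℝ^d` is a product of open intervals, `𝒬` is an admissible
covering of `X`, `T` satisfies (A₀′) and (A₁′), and `{ψ_Q}` is a `C¹` partition of unity
subordinate to `𝒬` (with `0 ≤ ψ_Q ≤ χ_{Q^*}`, `‖∇ψ_Q‖_∞ ≤ C₃ d_Q⁻¹` and `Σ ψ_Q = 1` on `X`),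
then `sup_{y∈X} Σ_Q ∫_{Q^{**}} sup_{0<t≤d_Q²} T_t(x,y)|ψ_Q(x) − ψ_Q(y)| dx ≤ C`. -/


theorem stmt3
    {d : ℕ} {X : Set (Rd d)} {κ : ℝ} (hκ : 1 < κ)
    (I : Fin d → Set ℝ) (hIopen : ∀ i, IsOpen (I i)) (hIord : ∀ i, (I i).OrdConnected)
    (hX : X = {x : Rd d | ∀ i, x i ∈ I i})
    {ι : Type} [Countable ι] (cov : AdmissibleCovering d X κ ι)
    (T : ℝ → Rd d → Rd d → ℝ)
    (hTmeas : Measurable fun p : ℝ × Rd d × Rd d => T p.1 p.2.1 p.2.2)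
    (C₀ ν : ℝ) (hC₀ : 0 < C₀) (hν : ν ∈ Set.Ioo (0 : ℝ) 1)
    -- (A₀′)
    (hA0 : ∀ t > 0, ∀ x ∈ X, ∀ y ∈ X,
      0 ≤ T t x y ∧ T t x y ≤ C₀ * t ^ ν * (t + dist x y ^ 2) ^ (-(d : ℝ) / 2 - ν))
    -- (A₁′)
    (hA1 : ∀ n : ι, ∀ y ∈ cov.Q n 1,
      (∫⁻ x in X \ cov.Q n 2, ⨆ (t : ℝ) (_ : 0 < t), ENNReal.ofReal (T t x y))
        ≤ ENNReal.ofReal C₀)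
    -- the partition of unity
    (ψ : ι → Rd d → ℝ) (C₃ : ℝ) (hC₃ : 0 < C₃)
    (hψC1 : ∀ n, ContDiffOn ℝ 1 (ψ n) X)
    (hψnonneg : ∀ n, ∀ x ∈ X, 0 ≤ ψ n x)
    (hψsupp : ∀ n, ∀ x ∈ X,
      ψ n x ≤ (cov.Q n 1).indicator (fun _ => (1 : ℝ)) x)
    (hψgrad : ∀ n, ∀ x ∈ X,
      ‖fderivWithin ℝ (ψ n) X x‖ ≤ C₃ / diam (cov.Q n 0))
    (hψsum : ∀ x ∈ X, HasSum (fun n => ψ n x) 1) :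
    ∃ C > 0, ∀ y ∈ X,
      (∑' n, ∫⁻ x in cov.Q n 2,
          ⨆ (t : ℝ) (_ : 0 < t) (_ : t ≤ diam (cov.Q n 0) ^ 2),
            ENNReal.ofReal (T t x y * |ψ n x - ψ n y|))
        ≤ ENNReal.ofReal C := by
  classical
  obtain ⟨hν0, hν1⟩ := hν
  rcases Nat.eq_zero_or_pos d with hd0 | hd
  · -- d = 0 : the space is a single point, so all differences vanish
    subst hd0
    refine ⟨1, one_pos, fun y hy => ?_⟩
    have hxy : ∀ x : Rd 0, x = y := fun x => by ext i; exact i.elim0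
    have hzero : ∀ n, (∫⁻ x in cov.Q n 2,
        ⨆ (t : ℝ) (_ : 0 < t) (_ : t ≤ diam (cov.Q n 0) ^ 2),
          ENNReal.ofReal (T t x y * |ψ n x - ψ n y|)) = 0 := by
      intro n
      have : ∀ x : Rd 0,
          (⨆ (t : ℝ) (_ : 0 < t) (_ : t ≤ diam (cov.Q n 0) ^ 2),
            ENNReal.ofReal (T t x y * |ψ n x - ψ n y|)) = 0 := by
        intro x
        rw [hxy x]
        simp
      simp only [this]
      simp
    rw [tsum_congr hzero]
    simp
  -- main case : d ≥ 1
  have hκ0 : (0 : ℝ) < κ := lt_trans one_pos hκ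
  have hXopen : IsOpen X := by
    rw [hX]
    have hrw : {x : Rd d | ∀ i, x i ∈ I i} = ⋂ i, (fun x : Rd d => x i) ⁻¹' (I i) := by
      ext x; simp
    rw [hrw]
    exact isOpen_iInter_of_finite fun i => (hIopen i).preimage (by fun_prop)
  have hXmeas : MeasurableSet X := hXopen.measurableSet
  have hXconv : Convex ℝ X := by
    rw [hX]
    intro u hu v hv a b ha hb hab i
    have happ : (a • u + b • v) i = a * u i + b * v i := by
      simp [PiLp.add_apply, PiLp.smul_apply, smul_eq_mul]
    rw [happ]
    have hconv : Convex ℝ (I i) := (hIord i).convex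
    simpa [smul_eq_mul] using hconv (hu i) (hv i) ha hb hab
  have hQmeas : ∀ (w : Rd d) (rr : Fin d → ℝ), MeasurableSet (cuboid X w rr) := by
    intro w rr
    have hrw : cuboid X w rr = X ∩ ⋂ i, {x : Rd d | |x i - w i| ≤ rr i} := by
      ext x
      simp only [cuboid, Set.mem_setOf_eq, Set.mem_inter_iff, Set.mem_iInter]
    rw [hrw]
    exact hXmeas.inter (MeasurableSet.iInter fun i =>
      measurableSet_le (by fun_prop) measurable_const)
  have hQmeas' : ∀ n k, MeasurableSet (cov.Q n k) := fun n k => hQmeas _ _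
  have hQsubX : ∀ n k, cov.Q n k ⊆ X := fun n k x hx => hx.1
  have hQ0 : ∀ n, cuboid X (cov.z n) (cov.r n) = cov.Q n 0 := by
    intro n
    show _ = cuboid X (cov.z n) fun i => κ ^ 0 * cov.r n i
    simp
  have hQmono : ∀ n, ∀ {k l : ℕ}, k ≤ l → cov.Q n k ⊆ cov.Q n l := by
    intro n k l hkl x hx
    refine ⟨hx.1, fun i => (hx.2 i).trans ?_⟩
    exact mul_le_mul_of_nonneg_right (pow_le_pow_right₀ hκ.le hkl) (cov.r_pos n i).le
  have hψle1 : ∀ n, ∀ x ∈ X, ψ n x ≤ 1 := by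
    intro n x hx
    refine (hψsupp n x hx).trans ?_
    by_cases h : x ∈ cov.Q n 1 <;> simp [h]
  -- the uniform constant
  set V : ℝ≥0∞ := volume (ball (0 : Rd d) 1) with hVdef
  set e₁ : ℝ≥0∞ := (1 - ENNReal.ofReal 2⁻¹)⁻¹ with he₁
  set e₂ : ℝ≥0∞ := (1 - ENNReal.ofReal ((2 : ℝ) ^ (-(2 * ν))))⁻¹ with he₂
  set M : ℝ≥0∞ := cov.C₃ * ENNReal.ofReal C₀ +
      cov.C₃ * (ENNReal.ofReal (C₀ * (cov.C₂ * C₃) * 2 ^ d) * V * e₁ +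
        ENNReal.ofReal (C₀ * cov.C₂ ^ (2 * ν) * 2 ^ d) * V * e₂) with hMdef
  have hVtop : V ≠ ⊤ := measure_ball_lt_top.ne
  have he₁top : e₁ ≠ ⊤ := by
    rw [he₁, Ne, ENNReal.inv_eq_top, tsub_eq_zero_iff_le]
    exact not_le.2 (ENNReal.ofReal_lt_one.2 (by norm_num))
  have he₂top : e₂ ≠ ⊤ := by
    rw [he₂, Ne, ENNReal.inv_eq_top, tsub_eq_zero_iff_le]
    refine not_le.2 (ENNReal.ofReal_lt_one.2 ?_)
    exact Real.rpow_lt_one_of_one_lt_of_neg one_lt_two (by linarith)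
  have hMtop : M ≠ ⊤ := by
    rw [hMdef]
    refine ENNReal.add_ne_top.2 ⟨ENNReal.mul_ne_top cov.C₃_lt_top.ne ENNReal.ofReal_ne_top, ?_⟩
    refine ENNReal.mul_ne_top cov.C₃_lt_top.ne (ENNReal.add_ne_top.2 ⟨?_, ?_⟩)
    · exact ENNReal.mul_ne_top (ENNReal.mul_ne_top ENNReal.ofReal_ne_top hVtop) he₁top
    · exact ENNReal.mul_ne_top (ENNReal.mul_ne_top ENNReal.ofReal_ne_top hVtop) he₂top
  refine ⟨M.toReal + 1, by positivity, fun y hy => ?_⟩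
  -- the sum is bounded by M
  suffices hkey : (∑' n, ∫⁻ x in cov.Q n 2,
      ⨆ (t : ℝ) (_ : 0 < t) (_ : t ≤ diam (cov.Q n 0) ^ 2),
        ENNReal.ofReal (T t x y * |ψ n x - ψ n y|)) ≤ M by
    refine hkey.trans ?_
    rw [ENNReal.ofReal_add ENNReal.toReal_nonneg zero_le_one, ENNReal.ofReal_toReal hMtop,
      ENNReal.ofReal_one]
    exact le_add_right le_rfl
  have habs : ∀ n, ∀ x ∈ X, |ψ n x - ψ n y| ≤ 1 := by
    intro n x hx
    rw [abs_sub_le_iff]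
    constructor
    · have h1 := hψle1 n x hx
      have h2 := hψnonneg n y hy
      linarith
    · have h1 := hψle1 n y hy
      have h2 := hψnonneg n x hx
      linarith
  -- choose the cuboid containing y
  obtain ⟨n₀, hn₀⟩ : ∃ n, y ∈ cov.Q n 0 := by
    have hyc := cov.covers hy
    rw [Set.mem_iUnion] at hyc
    obtain ⟨n, hn⟩ := hyc
    exact ⟨n, (hQ0 n) ▸ hn⟩
  set D₀ : ℝ := diam (cov.Q n₀ 0) with hD₀def
  set Nset : Set ι := {n | (cov.Q n 0 ∩ cov.Q n₀ 0).Nonempty} with hNdef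
  set F : ι → Rd d → ℝ≥0∞ := fun n x =>
    ⨆ (t : ℝ) (_ : 0 < t) (_ : t ≤ diam (cov.Q n 0) ^ 2),
      ENNReal.ofReal (T t x y * |ψ n x - ψ n y|) with hFdef
  -- if triple stars of Q n and Q n₀ intersect then n ∈ Nset
  have hnbr : ∀ n, (cov.Q n 3 ∩ cov.Q n₀ 3).Nonempty → n ∈ Nset := by
    intro n hn
    have := (cov.neighbors n n₀).1 hn
    rw [hQ0 n, hQ0 n₀] at this
    exact this
  -- the far part
  have hfar : (∑' n, if n ∈ Nset then 0 else ∫⁻ x in cov.Q n 2, F n x) ≤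
      cov.C₃ * ENNReal.ofReal C₀ := by
    set S : Rd d → ℝ≥0∞ := fun x => ⨆ (t : ℝ) (_ : 0 < t), ENNReal.ofReal (T t x y) with hS
    set g : ι → Rd d → ℝ≥0∞ := fun n x =>
      if n ∈ Nset then 0 else (cov.Q n 2).indicator S x with hg
    have hIS : ∀ n, (if n ∈ Nset then 0 else ∫⁻ x in cov.Q n 2, F n x) ≤ ∫⁻ x, g n x := by
      intro n
      by_cases h : n ∈ Nset
      · simp [hg, h]
      · simp only [hg, if_neg h]
        rw [← lintegral_indicator (hQmeas' n 2)]
        refine lintegral_mono fun x => ?_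
        by_cases hx : x ∈ cov.Q n 2
        · rw [Set.indicator_of_mem hx, Set.indicator_of_mem hx]
          refine iSup_le fun t => iSup_le fun ht => iSup_le fun _ => ?_
          have hx' : x ∈ X := hQsubX n 2 hx
          have h0 := (hA0 t ht x hx' y hy).1
          have hb := habs n x hx'
          refine le_trans (ENNReal.ofReal_le_ofReal ?_)
            (le_iSup₂ (f := fun t (_ : 0 < t) => ENNReal.ofReal (T t x y)) t ht)
          calc T t x y * |ψ n x - ψ n y| ≤ T t x y * 1 := mul_le_mul_of_nonneg_left hb h0
            _ = T t x y := mul_one _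
        · rw [Set.indicator_of_notMem hx, Set.indicator_of_notMem hx]
    have hpt : ∀ x, (∑' n, g n x) ≤ cov.C₃ * ((X \ cov.Q n₀ 2).indicator S x) := by
      intro x
      by_cases hxx : x ∈ X \ cov.Q n₀ 2
      · rw [Set.indicator_of_mem hxx]
        calc (∑' n, g n x)
            ≤ ∑' n, ((cov.Q n 3).indicator (fun _ => (1 : ℝ≥0∞)) x) * S x := by
              refine ENNReal.tsum_le_tsum fun n => ?_
              by_cases h : n ∈ Nset
              · simp [hg, h]
              · simp only [hg, if_neg h]
                by_cases hx2 : x ∈ cov.Q n 2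
                · rw [Set.indicator_of_mem hx2,
                    Set.indicator_of_mem (hQmono n (by norm_num : (2:ℕ) ≤ 3) hx2), one_mul]
                · rw [Set.indicator_of_notMem hx2]
                  exact zero_le
          _ = (∑' n, (cov.Q n 3).indicator (fun _ => (1 : ℝ≥0∞)) x) * S x :=
              ENNReal.tsum_mul_right
          _ ≤ cov.C₃ * S x := mul_le_mul_left (cov.finite_overlap x) _
      · rw [Set.indicator_of_notMem hxx, mul_zero]
        have hzero : ∀ n, g n x = 0 := by
          intro n
          by_cases h : n ∈ Nset
          · simp [hg, h]
          · simp only [hg, if_neg h]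
            have hnot : x ∉ cov.Q n 2 := by
              intro hx2
              have hxX : x ∈ X := hQsubX n 2 hx2
              have hxQ0 : x ∈ cov.Q n₀ 2 := by
                by_contra hno
                exact hxx ⟨hxX, hno⟩
              exact h (hnbr n ⟨x, hQmono n (by norm_num : (2:ℕ) ≤ 3) hx2,
                hQmono n₀ (by norm_num : (2:ℕ) ≤ 3) hxQ0⟩)
            rw [Set.indicator_of_notMem hnot]
        rw [tsum_congr hzero]
        simp
    calc (∑' n, if n ∈ Nset then 0 else ∫⁻ x in cov.Q n 2, F n x)
        ≤ ∑' n, ∫⁻ x, g n x := ENNReal.tsum_le_tsum hIS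
      _ ≤ ∫⁻ x, ∑' n, g n x := tsum_lintegral_le' _ _
      _ ≤ ∫⁻ x, cov.C₃ * ((X \ cov.Q n₀ 2).indicator S x) := lintegral_mono hpt
      _ = cov.C₃ * ∫⁻ x, (X \ cov.Q n₀ 2).indicator S x :=
          lintegral_const_mul' _ _ cov.C₃_lt_top.ne
      _ = cov.C₃ * ∫⁻ x in X \ cov.Q n₀ 2, S x := by
          rw [lintegral_indicator (hXmeas.diff (hQmeas' n₀ 2))]
      _ ≤ cov.C₃ * ENNReal.ofReal C₀ :=
          mul_le_mul_right (hA1 n₀ y (hQmono n₀ (Nat.zero_le 1) hn₀)) _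
  -- the near part
  have hnear : (∑' n, if n ∈ Nset then ∫⁻ x in cov.Q n 2, F n x else 0) ≤
      cov.C₃ * (ENNReal.ofReal (C₀ * (cov.C₂ * C₃) * 2 ^ d) * V * e₁ +
        ENNReal.ofReal (C₀ * cov.C₂ ^ (2 * ν) * 2 ^ d) * V * e₂) := by
    have hcmp1 : ∀ n ∈ Nset, diam (cov.Q n 0) ≤ cov.C₂ * D₀ := by
      intro n hn
      have hne : (cuboid X (cov.z n₀) (cov.r n₀) ∩ cuboid X (cov.z n) (cov.r n)).Nonempty := by
        rw [hQ0 n₀, hQ0 n]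
        obtain ⟨x, hx1, hx2⟩ := hn
        exact ⟨x, hx2, hx1⟩
      have := cov.comparable n₀ n hne
      rwa [hQ0 n, hQ0 n₀] at this
    have hcmp2 : ∀ n ∈ Nset, D₀ ≤ cov.C₂ * diam (cov.Q n 0) := by
      intro n hn
      have hne : (cuboid X (cov.z n) (cov.r n) ∩ cuboid X (cov.z n₀) (cov.r n₀)).Nonempty := by
        rw [hQ0 n, hQ0 n₀]; exact hn
      have := cov.comparable n n₀ hne
      rwa [hQ0 n₀, hQ0 n] at this
    by_cases hD0 : D₀ ≤ 0
    · -- degenerate case : all near terms vanish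
      have hzero : ∀ n, (if n ∈ Nset then ∫⁻ x in cov.Q n 2, F n x else 0) = 0 := by
        intro n
        by_cases h : n ∈ Nset
        · rw [if_pos h]
          have hDn : diam (cov.Q n 0) = 0 :=
            le_antisymm (by nlinarith [hcmp1 n h, cov.C₂_pos]) diam_nonneg
          have hF0 : ∀ x, F n x = 0 := by
            intro x
            simp only [hFdef]
            refine le_antisymm (iSup_le fun t => iSup_le fun ht => iSup_le fun ht2 => ?_)
              zero_le
            rw [hDn] at ht2
            norm_num at ht2
            linarith
          simp only [hF0]
          simp
        · rw [if_neg h]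
      rw [tsum_congr hzero]
      simp
    push_neg at hD0
    set a : ℝ := C₀ * (cov.C₂ * C₃ / D₀) with ha
    set b : ℝ := C₀ * (cov.C₂ * D₀) ^ (2 * ν) with hb
    have hapos : 0 ≤ a := by
      rw [ha]
      exact mul_nonneg hC₀.le (div_nonneg (mul_nonneg cov.C₂_pos.le hC₃.le) hD0.le)
    have hbpos : 0 ≤ b := by
      rw [hb]
      exact mul_nonneg hC₀.le (Real.rpow_nonneg (mul_nonneg cov.C₂_pos.le hD0.le) _)
    set G : Rd d → ℝ≥0∞ := fun x =>
      min (ENNReal.ofReal (a * dist x y ^ ((1:ℝ) - d)))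
        (ENNReal.ofReal (b * dist x y ^ (-(d:ℝ) - 2 * ν))) with hG
    have hFG : ∀ n ∈ Nset, ∀ x ∈ cov.Q n 2, F n x ≤ G x := by
      intro n hn x hx
      simp only [hFdef]
      refine iSup_le fun t => iSup_le fun ht => iSup_le fun ht2 => ?_
      have hx' : x ∈ X := hQsubX n 2 hx
      rcases eq_or_ne x y with rfl | hxy
      · simp only [sub_self, abs_zero, mul_zero, ENNReal.ofReal_zero]
        exact zero_le
      have hr : 0 < dist x y := dist_pos.2 hxy
      have hDn : 0 < diam (cov.Q n 0) := by
        rcases lt_or_ge 0 (diam (cov.Q n 0)) with h | h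
        · exact h
        · exfalso
          have h2 : diam (cov.Q n 0) ^ 2 ≤ 0 := by nlinarith [diam_nonneg (s := cov.Q n 0)]
          linarith
      obtain ⟨hT0, hTle⟩ := hA0 t ht x hx' y hy
      have habs' := habs n x hx'
      have hss : 0 < t + dist x y ^ 2 := by positivity
      have hsplit : (t + dist x y ^ 2) ^ (-(d:ℝ)/2 - ν)
          = (t + dist x y ^ 2) ^ (-(d:ℝ)/2) * (t + dist x y ^ 2) ^ (-ν) := by
        rw [← Real.rpow_add hss]
        ring_nf
      have hTr : T t x y ≤ C₀ * dist x y ^ (-(d:ℝ)) := by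
        have e2 : t ^ ν ≤ (t + dist x y ^ 2) ^ ν :=
          Real.rpow_le_rpow ht.le (by nlinarith) hν0.le
        have e3 : t ^ ν * (t + dist x y ^ 2) ^ (-ν) ≤ 1 := by
          calc t ^ ν * (t + dist x y ^ 2) ^ (-ν)
              ≤ (t + dist x y ^ 2) ^ ν * (t + dist x y ^ 2) ^ (-ν) :=
                mul_le_mul_of_nonneg_right e2 (Real.rpow_nonneg hss.le _)
            _ = 1 := by rw [← Real.rpow_add hss]; simp
        have e4 : (t + dist x y ^ 2) ^ (-(d:ℝ)/2) ≤ dist x y ^ (-(d:ℝ)) := by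
          have e5 : ((dist x y ^ 2 : ℝ)) ^ (-(d:ℝ)/2) = dist x y ^ (-(d:ℝ)) := by
            rw [← Real.rpow_natCast (dist x y) 2, ← Real.rpow_mul hr.le]
            congr 1
            push_cast
            ring
          rw [← e5]
          refine Real.rpow_le_rpow_of_nonpos (by positivity) (by nlinarith) ?_
          have hdn : (0:ℝ) ≤ d := Nat.cast_nonneg d
          linarith
        calc T t x y ≤ C₀ * t ^ ν * (t + dist x y ^ 2) ^ (-(d:ℝ)/2 - ν) := hTle
          _ = C₀ * ((t ^ ν * (t + dist x y ^ 2) ^ (-ν)) * (t + dist x y ^ 2) ^ (-(d:ℝ)/2)) := by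
              rw [hsplit]; ring
          _ ≤ C₀ * (1 * dist x y ^ (-(d:ℝ))) := by
              refine mul_le_mul_of_nonneg_left ?_ hC₀.le
              exact mul_le_mul e3 e4 (Real.rpow_nonneg hss.le _) one_pos.le
          _ = C₀ * dist x y ^ (-(d:ℝ)) := by rw [one_mul]
      have hlip : |ψ n x - ψ n y| ≤ cov.C₂ * C₃ / D₀ * dist x y := by
        have hmvt := hXconv.norm_image_sub_le_of_norm_fderivWithin_le
          ((hψC1 n).differentiableOn one_ne_zero) (fun w hw => hψgrad n w hw) hy hx'
        rw [Real.norm_eq_abs] at hmvt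
        have hxynorm : ‖x - y‖ = dist x y := (dist_eq_norm x y).symm
        rw [hxynorm] at hmvt
        refine hmvt.trans ?_
        refine mul_le_mul_of_nonneg_right ?_ dist_nonneg
        rw [div_le_div_iff₀ hDn hD0]
        have h2 := hcmp2 n hn
        nlinarith [hC₃.le]
      refine le_min ?_ ?_
      · refine ENNReal.ofReal_le_ofReal ?_
        have hrr : dist x y ^ (-(d:ℝ)) * dist x y = dist x y ^ ((1:ℝ) - d) := by
          nth_rewrite 2 [← Real.rpow_one (dist x y)]
          rw [← Real.rpow_add hr]
          congr 1
          ring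
        calc T t x y * |ψ n x - ψ n y|
            ≤ (C₀ * dist x y ^ (-(d:ℝ))) * (cov.C₂ * C₃ / D₀ * dist x y) :=
              mul_le_mul hTr hlip (abs_nonneg _)
                (mul_nonneg hC₀.le (Real.rpow_nonneg dist_nonneg _))
          _ = C₀ * (cov.C₂ * C₃ / D₀) * (dist x y ^ (-(d:ℝ)) * dist x y) := by ring
          _ = a * dist x y ^ ((1:ℝ) - d) := by rw [hrr, ha]
      · refine ENNReal.ofReal_le_ofReal ?_
        have hDn2 : diam (cov.Q n 0) ≤ cov.C₂ * D₀ := hcmp1 n hn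
        have htb : t ^ ν ≤ (cov.C₂ * D₀) ^ (2 * ν) := by
          calc t ^ ν ≤ (diam (cov.Q n 0) ^ 2) ^ ν := Real.rpow_le_rpow ht.le ht2 hν0.le
            _ ≤ ((cov.C₂ * D₀) ^ 2) ^ ν := by
                refine Real.rpow_le_rpow (by positivity) ?_ hν0.le
                nlinarith [diam_nonneg (s := cov.Q n 0)]
            _ = (cov.C₂ * D₀) ^ (2 * ν) := by
                rw [← Real.rpow_natCast (cov.C₂ * D₀) 2,
                  ← Real.rpow_mul (mul_nonneg cov.C₂_pos.le hD0.le)]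
                norm_num
        have hrb : (t + dist x y ^ 2) ^ (-(d:ℝ)/2 - ν) ≤ dist x y ^ (-(d:ℝ) - 2 * ν) := by
          have e5 : ((dist x y ^ 2 : ℝ)) ^ (-(d:ℝ)/2 - ν) = dist x y ^ (-(d:ℝ) - 2 * ν) := by
            rw [← Real.rpow_natCast (dist x y) 2, ← Real.rpow_mul hr.le]
            congr 1
            ring
          rw [← e5]
          refine Real.rpow_le_rpow_of_nonpos (by positivity) (by nlinarith) ?_
          have hdn : (0:ℝ) ≤ d := Nat.cast_nonneg d
          linarith
        calc T t x y * |ψ n x - ψ n y| ≤ T t x y * 1 := mul_le_mul_of_nonneg_left habs' hT0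
          _ = T t x y := mul_one _
          _ ≤ C₀ * t ^ ν * (t + dist x y ^ 2) ^ (-(d:ℝ)/2 - ν) := hTle
          _ ≤ C₀ * (cov.C₂ * D₀) ^ (2 * ν) * dist x y ^ (-(d:ℝ) - 2 * ν) := by
              refine mul_le_mul (mul_le_mul_of_nonneg_left htb hC₀.le) hrb
                (Real.rpow_nonneg hss.le _)
                (mul_nonneg hC₀.le
                  (Real.rpow_nonneg (mul_nonneg cov.C₂_pos.le hD0.le) _))
          _ = b * dist x y ^ (-(d:ℝ) - 2 * ν) := by rw [hb]
    have hIG : ∀ n, (if n ∈ Nset then ∫⁻ x in cov.Q n 2, F n x else 0) ≤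
        ∫⁻ x, (if n ∈ Nset then (cov.Q n 2).indicator G x else 0) := by
      intro n
      by_cases h : n ∈ Nset
      · simp only [if_pos h]
        rw [← lintegral_indicator (hQmeas' n 2)]
        refine lintegral_mono fun x => ?_
        by_cases hx : x ∈ cov.Q n 2
        · rw [Set.indicator_of_mem hx, Set.indicator_of_mem hx]
          exact hFG n h x hx
        · rw [Set.indicator_of_notMem hx, Set.indicator_of_notMem hx]
      · simp [h]
    have hptG : ∀ x, (∑' n, (if n ∈ Nset then (cov.Q n 2).indicator G x else 0)) ≤
        cov.C₃ * G x := by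
      intro x
      calc (∑' n, (if n ∈ Nset then (cov.Q n 2).indicator G x else 0))
          ≤ ∑' n, ((cov.Q n 3).indicator (fun _ => (1 : ℝ≥0∞)) x) * G x := by
            refine ENNReal.tsum_le_tsum fun n => ?_
            by_cases h : n ∈ Nset
            · simp only [if_pos h]
              by_cases hx2 : x ∈ cov.Q n 2
              · rw [Set.indicator_of_mem hx2,
                  Set.indicator_of_mem (hQmono n (by norm_num : (2:ℕ) ≤ 3) hx2), one_mul]
              · rw [Set.indicator_of_notMem hx2]
                exact zero_le
            · simp only [if_neg h]
              exact zero_le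
        _ = (∑' n, (cov.Q n 3).indicator (fun _ => (1 : ℝ≥0∞)) x) * G x :=
            ENNReal.tsum_mul_right
        _ ≤ cov.C₃ * G x := mul_le_mul_left (cov.finite_overlap x) _
    have hGmeas1 : Measurable fun x : Rd d => ENNReal.ofReal (a * dist x y ^ ((1:ℝ) - d)) := by
      fun_prop
    have hGint : ∫⁻ x, G x ≤
        ENNReal.ofReal (C₀ * (cov.C₂ * C₃) * 2 ^ d) * V * e₁ +
        ENNReal.ofReal (C₀ * cov.C₂ ^ (2 * ν) * 2 ^ d) * V * e₂ := by
      have hGsplit : ∀ x, G x ≤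
          (ball y D₀).indicator (fun x => ENNReal.ofReal (a * dist x y ^ ((1:ℝ) - d))) x +
          ((ball y D₀)ᶜ).indicator
            (fun x => ENNReal.ofReal (b * dist x y ^ (-(d:ℝ) - 2 * ν))) x := by
        intro x
        by_cases hxb : x ∈ ball y D₀
        · rw [Set.indicator_of_mem hxb, Set.indicator_of_notMem (by simpa using hxb),
            add_zero]
          exact min_le_left _ _
        · rw [Set.indicator_of_notMem hxb, Set.indicator_of_mem (by simpa using hxb),
            zero_add]
          exact min_le_right _ _
      have hpart1 : (∫⁻ x in ball y D₀, ENNReal.ofReal (a * dist x y ^ ((1:ℝ) - d))) ≤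
          ENNReal.ofReal (C₀ * (cov.C₂ * C₃) * 2 ^ d) * V * e₁ := by
        have h1 : ∀ x : Rd d, ENNReal.ofReal (a * dist x y ^ ((1:ℝ) - d)) =
            ENNReal.ofReal a * ENNReal.ofReal (dist x y ^ ((1:ℝ) - d)) := fun x =>
          ENNReal.ofReal_mul hapos
        simp_rw [h1]
        rw [lintegral_const_mul' _ _ ENNReal.ofReal_ne_top]
        calc ENNReal.ofReal a * ∫⁻ x in ball y D₀, ENNReal.ofReal (dist x y ^ ((1:ℝ) - d))
            ≤ ENNReal.ofReal a * (ENNReal.ofReal (2 ^ d * D₀) * V * e₁) :=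
              mul_le_mul_right (lintegral_ball_rpow_le hd y hD0) _
          _ = ENNReal.ofReal (C₀ * (cov.C₂ * C₃) * 2 ^ d) * V * e₁ := by
              rw [← mul_assoc, ← mul_assoc, ← ENNReal.ofReal_mul hapos]
              congr 3
              rw [ha]
              field_simp
      have hpart2 : (∫⁻ x in (ball y D₀)ᶜ,
            ENNReal.ofReal (b * dist x y ^ (-(d:ℝ) - 2 * ν))) ≤
          ENNReal.ofReal (C₀ * cov.C₂ ^ (2 * ν) * 2 ^ d) * V * e₂ := by
        have h1 : ∀ x : Rd d, ENNReal.ofReal (b * dist x y ^ (-(d:ℝ) - 2 * ν)) =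
            ENNReal.ofReal b * ENNReal.ofReal (dist x y ^ (-(d:ℝ) - 2 * ν)) := fun x =>
          ENNReal.ofReal_mul hbpos
        simp_rw [h1]
        rw [lintegral_const_mul' _ _ ENNReal.ofReal_ne_top]
        calc ENNReal.ofReal b * ∫⁻ x in (ball y D₀)ᶜ,
              ENNReal.ofReal (dist x y ^ (-(d:ℝ) - 2 * ν))
            ≤ ENNReal.ofReal b * (ENNReal.ofReal (2 ^ d * D₀ ^ (-(2 * ν))) * V * e₂) :=
              mul_le_mul_right (lintegral_compl_ball_rpow_le hd y hD0 hν0) _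
          _ = ENNReal.ofReal (C₀ * cov.C₂ ^ (2 * ν) * 2 ^ d) * V * e₂ := by
              rw [← mul_assoc, ← mul_assoc, ← ENNReal.ofReal_mul hbpos]
              congr 3
              rw [hb]
              have hsplit2 : (cov.C₂ * D₀) ^ (2 * ν) =
                  cov.C₂ ^ (2 * ν) * D₀ ^ (2 * ν) :=
                Real.mul_rpow cov.C₂_pos.le hD0.le
              have hcancel : D₀ ^ (2 * ν) * D₀ ^ (-(2 * ν)) = 1 := by
                rw [← Real.rpow_add hD0]
                simp
              calc C₀ * (cov.C₂ * D₀) ^ (2 * ν) * (2 ^ d * D₀ ^ (-(2 * ν)))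
                  = C₀ * cov.C₂ ^ (2 * ν) * 2 ^ d * (D₀ ^ (2 * ν) * D₀ ^ (-(2 * ν))) := by
                    rw [hsplit2]; ring
                _ = C₀ * cov.C₂ ^ (2 * ν) * 2 ^ d := by rw [hcancel, mul_one]
      calc ∫⁻ x, G x
          ≤ ∫⁻ x, ((ball y D₀).indicator
              (fun x => ENNReal.ofReal (a * dist x y ^ ((1:ℝ) - d))) x +
            ((ball y D₀)ᶜ).indicator
              (fun x => ENNReal.ofReal (b * dist x y ^ (-(d:ℝ) - 2 * ν))) x) :=
            lintegral_mono hGsplit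
        _ = (∫⁻ x, (ball y D₀).indicator
              (fun x => ENNReal.ofReal (a * dist x y ^ ((1:ℝ) - d))) x) +
            ∫⁻ x, ((ball y D₀)ᶜ).indicator
              (fun x => ENNReal.ofReal (b * dist x y ^ (-(d:ℝ) - 2 * ν))) x :=
            lintegral_add_left (hGmeas1.indicator measurableSet_ball) _
        _ = (∫⁻ x in ball y D₀, ENNReal.ofReal (a * dist x y ^ ((1:ℝ) - d))) +
            ∫⁻ x in (ball y D₀)ᶜ, ENNReal.ofReal (b * dist x y ^ (-(d:ℝ) - 2 * ν)) := by
            rw [lintegral_indicator measurableSet_ball,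
              lintegral_indicator measurableSet_ball.compl]
        _ ≤ _ := add_le_add hpart1 hpart2
    calc (∑' n, if n ∈ Nset then ∫⁻ x in cov.Q n 2, F n x else 0)
        ≤ ∑' n, ∫⁻ x, (if n ∈ Nset then (cov.Q n 2).indicator G x else 0) :=
          ENNReal.tsum_le_tsum hIG
      _ ≤ ∫⁻ x, ∑' n, (if n ∈ Nset then (cov.Q n 2).indicator G x else 0) :=
          tsum_lintegral_le' _ _
      _ ≤ ∫⁻ x, cov.C₃ * G x := lintegral_mono hptG
      _ = cov.C₃ * ∫⁻ x, G x := lintegral_const_mul' _ _ cov.C₃_lt_top.ne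
      _ ≤ _ := mul_le_mul_right hGint _
  calc (∑' n, ∫⁻ x in cov.Q n 2, F n x)
      = (∑' n, ((if n ∈ Nset then 0 else ∫⁻ x in cov.Q n 2, F n x) +
          (if n ∈ Nset then ∫⁻ x in cov.Q n 2, F n x else 0))) := by
        refine tsum_congr fun n => ?_
        by_cases h : n ∈ Nset <;> simp [h]
    _ = (∑' n, if n ∈ Nset then 0 else ∫⁻ x in cov.Q n 2, F n x) +
          (∑' n, if n ∈ Nset then ∫⁻ x in cov.Q n 2, F n x else 0) := ENNReal.tsum_add
    _ ≤ M := by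
        rw [hMdef]
        exact add_le_add hfar hnear
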